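/- Let a₁,a₂,b₁,b₂ ∈ k satisfy a₁ ≠ 0, a₂ ≠ 0, a₁ ≠ a₂, b₁ ≠ 0, b₂ ≠ 0, b₁ ≠ b₂. Then the quotient of A*B by the two-sided ideal generated by the single commutator [a₁p₁ + a₂p₂, b₁q₁ + b₂q₂] is isomorphic as a k-algebra to k^⊕9; in particular every simple module over this quotient is one-dimensional. -/
import Mathlib


open scoped TensorProduct

/-- A two-element family of types, used to form binary free products. -/
def fam (A B : Type) : Bool → Type
  | true => A
  | false => B

instance famSemiring (A B : Type) [Semiring A] [Semiring B] : ∀ b, Semiring (fam A B b)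
  | true => ‹Semiring A›
  | false => ‹Semiring B›

instance famAlgebra (k A B : Type) [CommSemiring k] [Semiring A] [Semiring B]
    [Algebra k A] [Algebra k B] : ∀ b, Algebra k (fam A B b)
  | true => ‹Algebra k A›
  | false => ‹Algebra k B›

/-- The free product (coproduct in the category of unital associative `k`-algebras)
`A * B` of two `k`-algebras. -/
abbrev FP (k A B : Type) [CommSemiring k] [Semiring A] [Semiring B]
    [Algebra k A] [Algebra k B] : Type :=
  LinearAlgebra.FreeProduct k (fam A B)

/-- The canonical map `A →ₐ[k] A * B`. -/
noncomputable def inl (k A B : Type) [CommSemiring k] [Semiring A] [Semiring B]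
    [Algebra k A] [Algebra k B] : A →ₐ[k] FP k A B :=
  LinearAlgebra.FreeProduct.ι k (fam A B) true

/-- The canonical map `B →ₐ[k] A * B`. -/
noncomputable def inr (k A B : Type) [CommSemiring k] [Semiring A] [Semiring B]
    [Algebra k A] [Algebra k B] : B →ₐ[k] FP k A B :=
  LinearAlgebra.FreeProduct.ι k (fam A B) false

/-- The image in `A*B` of the `i`-th standard primitive idempotent of `A = k^⊕3`. -/
noncomputable def pgen (k : Type) [Field k] (i : Fin 3) : FP k (Fin 3 → k) (Fin 3 → k) :=
  inl k (Fin 3 → k) (Fin 3 → k) (Pi.single i 1)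

/-- The image in `A*B` of the `i`-th standard primitive idempotent of `B = k^⊕3`. -/
noncomputable def qgen (k : Type) [Field k] (i : Fin 3) : FP k (Fin 3 → k) (Fin 3 → k) :=
  inr k (Fin 3 → k) (Fin 3 → k) (Pi.single i 1)

/-- The commutator `[a₁p₁ + a₂p₂, b₁q₁ + b₂q₂]` in `k^⊕3 * k^⊕3`. -/
noncomputable def commab (k : Type) [Field k] (a₁ a₂ b₁ b₂ : k) :
    FP k (Fin 3 → k) (Fin 3 → k) :=
  (a₁ • pgen k 0 + a₂ • pgen k 1) * (b₁ • qgen k 0 + b₂ • qgen k 1)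
    - (b₁ • qgen k 0 + b₂ • qgen k 1) * (a₁ • pgen k 0 + a₂ • pgen k 1)

/-- The quotient of `k^⊕3 * k^⊕3` by the two-sided ideal generated by
`[a₁p₁ + a₂p₂, b₁q₁ + b₂q₂]`. -/
abbrev Qab (k : Type) [Field k] (a₁ a₂ b₁ b₂ : k) : Type :=
  RingQuot (fun u v => u = commab k a₁ a₂ b₁ b₂ ∧ v = 0)

namespace St9

open LinearAlgebra.FreeProduct

variable {k : Type} [Field k]

lemma single_one_mul {n : ℕ} (i j : Fin n) :
    (Pi.single i 1 : Fin n → k) * Pi.single j 1 = if i = j then Pi.single i 1 else 0 := by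
  rcases eq_or_ne i j with rfl | h
  · rw [if_pos rfl]; funext x
    simp only [Pi.mul_apply, Pi.single_apply]
    split <;> simp
  · rw [if_neg h]; funext x
    simp only [Pi.mul_apply, Pi.single_apply, Pi.zero_apply]
    rcases eq_or_ne x i with rfl | hx
    · rw [if_pos rfl, one_mul, if_neg (fun hj : x = j => h hj)]
    · rw [if_neg hx, zero_mul]

lemma single_one_sum {n : ℕ} : ∑ i : Fin n, (Pi.single i 1 : Fin n → k) = 1 := by
  simpa using Finset.univ_sum_single (1 : Fin n → k)

lemma pgen_mul (i j : Fin 3) : pgen k i * pgen k j = if i = j then pgen k i else 0 := by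
  unfold pgen
  rw [← map_mul, single_one_mul]
  split <;> simp

lemma qgen_mul (i j : Fin 3) : qgen k i * qgen k j = if i = j then qgen k i else 0 := by
  unfold qgen
  rw [← map_mul, single_one_mul]
  split <;> simp

lemma pgen_sum : ∑ i, pgen k i = 1 := by
  unfold pgen
  rw [← map_sum, single_one_sum, map_one]

lemma qgen_sum : ∑ i, qgen k i = 1 := by
  unfold qgen
  rw [← map_sum, single_one_sum, map_one]

/-- key spectral lemma: an idempotent component of `u` commutes with whatever `u` commutes with -/
lemma aux_comm {R : Type} [Ring R] [Algebra k R] {P₀ P₁ v : R} {a₁ a₂ : k}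
    (h00 : P₀ * P₀ = P₀) (h01 : P₀ * P₁ = 0) (h10 : P₁ * P₀ = 0) (h11 : P₁ * P₁ = P₁)
    (ha₁ : a₁ ≠ 0) (ha : a₁ ≠ a₂)
    (h : Commute (a₁ • P₀ + a₂ • P₁) v) : Commute P₀ v := by
  set u := a₁ • P₀ + a₂ • P₁ with hu
  have huu : u * u - a₂ • u = (a₁ * (a₁ - a₂)) • P₀ := by
    rw [hu, add_mul, mul_add, mul_add, smul_mul_smul_comm, smul_mul_smul_comm,
      smul_mul_smul_comm, smul_mul_smul_comm, h00, h01, h10, h11, smul_zero, smul_zero]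
    module
  have hP0 : P₀ = (a₁ * (a₁ - a₂))⁻¹ • (u * u - a₂ • u) := by
    rw [huu, smul_smul, inv_mul_cancel₀ (mul_ne_zero ha₁ (sub_ne_zero.mpr ha)), one_smul]
  rw [hP0]
  exact ((h.mul_left h).sub_left (h.smul_left a₂)).smul_left _


section main
variable (k)
variable (a₁ a₂ b₁ b₂ : k)

/-- projections `k^3 → k^{3×3}` -/
noncomputable def fmap1 : (Fin 3 → k) →ₐ[k] (Fin 3 × Fin 3 → k) :=
  Pi.algHom k _ (fun m => Pi.evalAlgHom k (fun _ => k) m.1)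

noncomputable def fmap2 : (Fin 3 → k) →ₐ[k] (Fin 3 × Fin 3 → k) :=
  Pi.algHom k _ (fun m => Pi.evalAlgHom k (fun _ => k) m.2)

noncomputable def fwdmaps : {i : Bool} → fam (Fin 3 → k) (Fin 3 → k) i →ₐ[k] (Fin 3 × Fin 3 → k)
  | true => fmap1 k
  | false => fmap2 k

noncomputable def fwd : FP k (Fin 3 → k) (Fin 3 → k) →ₐ[k] (Fin 3 × Fin 3 → k) :=
  lift k (fam (Fin 3 → k) (Fin 3 → k)) (fun {i} => fwdmaps k)

lemma fwd_comp_inl :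
    (fwd k).comp (inl k (Fin 3 → k) (Fin 3 → k)) = fmap1 k :=
  lift_comp_ι k (fam (Fin 3 → k) (Fin 3 → k)) (fun {i} => fwdmaps k) (i := true)

lemma fwd_comp_inr :
    (fwd k).comp (inr k (Fin 3 → k) (Fin 3 → k)) = fmap2 k :=
  lift_comp_ι k (fam (Fin 3 → k) (Fin 3 → k)) (fun {i} => fwdmaps k) (i := false)

lemma fwd_pgen (i : Fin 3) : fwd k (pgen k i) = fmap1 k (Pi.single i 1) :=
  AlgHom.congr_fun (fwd_comp_inl k) (Pi.single i 1)

lemma fwd_qgen (i : Fin 3) : fwd k (qgen k i) = fmap2 k (Pi.single i 1) :=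
  AlgHom.congr_fun (fwd_comp_inr k) (Pi.single i 1)

lemma fwd_commab : fwd k (commab k a₁ a₂ b₁ b₂) = 0 := by
  rw [commab, map_sub, map_mul, map_mul, mul_comm, sub_self]

noncomputable def fwd' : Qab k a₁ a₂ b₁ b₂ →ₐ[k] (Fin 3 × Fin 3 → k) :=
  RingQuot.liftAlgHom k ⟨fwd k, by rintro x y ⟨rfl, rfl⟩; rw [fwd_commab, map_zero]⟩

lemma fwd'_mk (x : FP k (Fin 3 → k) (Fin 3 → k)) :
    fwd' k a₁ a₂ b₁ b₂ (RingQuot.mkAlgHom k _ x) = fwd k x := by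
  rw [fwd', RingQuot.liftAlgHom_mkAlgHom_apply]

/-- the idempotents in the quotient -/
noncomputable def Pq (i : Fin 3) : Qab k a₁ a₂ b₁ b₂ :=
  RingQuot.mkAlgHom k _ (pgen k i)

noncomputable def Qq (j : Fin 3) : Qab k a₁ a₂ b₁ b₂ :=
  RingQuot.mkAlgHom k _ (qgen k j)

lemma Pq_mul (i j : Fin 3) :
    Pq k a₁ a₂ b₁ b₂ i * Pq k a₁ a₂ b₁ b₂ j = if i = j then Pq k a₁ a₂ b₁ b₂ i else 0 := by
  unfold Pq
  rw [← map_mul, pgen_mul]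
  split <;> simp

lemma Qq_mul (i j : Fin 3) :
    Qq k a₁ a₂ b₁ b₂ i * Qq k a₁ a₂ b₁ b₂ j = if i = j then Qq k a₁ a₂ b₁ b₂ i else 0 := by
  unfold Qq
  rw [← map_mul, qgen_mul]
  split <;> simp

lemma Pq_sum : ∑ i, Pq k a₁ a₂ b₁ b₂ i = 1 := by
  unfold Pq
  rw [← map_sum, pgen_sum, map_one]

lemma Qq_sum : ∑ j, Qq k a₁ a₂ b₁ b₂ j = 1 := by
  unfold Qq
  rw [← map_sum, qgen_sum, map_one]

lemma comm_main :
    Commute (a₁ • Pq k a₁ a₂ b₁ b₂ 0 + a₂ • Pq k a₁ a₂ b₁ b₂ 1)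
      (b₁ • Qq k a₁ a₂ b₁ b₂ 0 + b₂ • Qq k a₁ a₂ b₁ b₂ 1) := by
  have h : RingQuot.mkAlgHom k (fun u v => u = commab k a₁ a₂ b₁ b₂ ∧ v = 0)
      (commab k a₁ a₂ b₁ b₂) = 0 := by
    rw [RingQuot.mkAlgHom_rel k ⟨rfl, rfl⟩, map_zero]
  rw [commab, map_sub, sub_eq_zero] at h
  have h' := h
  simp only [map_mul, map_add, map_smul] at h'
  exact h'


lemma comm_one_sub_sub {R : Type} [Ring R] {x y v : R} (hx : x * v = v * x)
    (hy : y * v = v * y) : (1 - x - y) * v = v * (1 - x - y) := by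
  rw [sub_mul, sub_mul, one_mul, hx, hy, mul_sub, mul_sub, mul_one]

lemma comm_add_swap {R : Type} [Ring R] {x y v : R} (h : (x + y) * v = v * (x + y)) :
    (y + x) * v = v * (y + x) := by rwa [add_comm y x]

set_option maxHeartbeats 1000000 in
lemma PQ_commute (ha₁ : a₁ ≠ 0) (ha₂ : a₂ ≠ 0) (ha : a₁ ≠ a₂)
    (hb₁ : b₁ ≠ 0) (hb₂ : b₂ ≠ 0) (hb : b₁ ≠ b₂) (i j : Fin 3) :
    Pq k a₁ a₂ b₁ b₂ i * Qq k a₁ a₂ b₁ b₂ j = Qq k a₁ a₂ b₁ b₂ j * Pq k a₁ a₂ b₁ b₂ i := by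
  have pm := Pq_mul k a₁ a₂ b₁ b₂
  have qm := Qq_mul k a₁ a₂ b₁ b₂
  have h := comm_main k a₁ a₂ b₁ b₂
  have hP0 : Pq k a₁ a₂ b₁ b₂ 0 * (b₁ • Qq k a₁ a₂ b₁ b₂ 0 + b₂ • Qq k a₁ a₂ b₁ b₂ 1)
      = (b₁ • Qq k a₁ a₂ b₁ b₂ 0 + b₂ • Qq k a₁ a₂ b₁ b₂ 1) * Pq k a₁ a₂ b₁ b₂ 0 :=
    aux_comm (P₀ := Pq k a₁ a₂ b₁ b₂ 0) (P₁ := Pq k a₁ a₂ b₁ b₂ 1)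
      (by simpa using pm 0 0) (by simpa using pm 0 1) (by simpa using pm 1 0)
      (by simpa using pm 1 1) ha₁ ha h
  have hP1 : Pq k a₁ a₂ b₁ b₂ 1 * (b₁ • Qq k a₁ a₂ b₁ b₂ 0 + b₂ • Qq k a₁ a₂ b₁ b₂ 1)
      = (b₁ • Qq k a₁ a₂ b₁ b₂ 0 + b₂ • Qq k a₁ a₂ b₁ b₂ 1) * Pq k a₁ a₂ b₁ b₂ 1 :=
    aux_comm (P₀ := Pq k a₁ a₂ b₁ b₂ 1) (P₁ := Pq k a₁ a₂ b₁ b₂ 0)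
      (by simpa using pm 1 1) (by simpa using pm 1 0) (by simpa using pm 0 1)
      (by simpa using pm 0 0) ha₂ (Ne.symm ha) (comm_add_swap (R := Qab k a₁ a₂ b₁ b₂) h)
  have hP2sum : Pq k a₁ a₂ b₁ b₂ 2 = 1 - Pq k a₁ a₂ b₁ b₂ 0 - Pq k a₁ a₂ b₁ b₂ 1 := by
    have h3 := Pq_sum k a₁ a₂ b₁ b₂
    rw [Fin.sum_univ_three] at h3
    rw [← h3]; abel
  have hP2 : Pq k a₁ a₂ b₁ b₂ 2 * (b₁ • Qq k a₁ a₂ b₁ b₂ 0 + b₂ • Qq k a₁ a₂ b₁ b₂ 1)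
      = (b₁ • Qq k a₁ a₂ b₁ b₂ 0 + b₂ • Qq k a₁ a₂ b₁ b₂ 1) * Pq k a₁ a₂ b₁ b₂ 2 := by
    rw [hP2sum]
    exact comm_one_sub_sub (R := Qab k a₁ a₂ b₁ b₂) hP0 hP1
  have hPi : Pq k a₁ a₂ b₁ b₂ i * (b₁ • Qq k a₁ a₂ b₁ b₂ 0 + b₂ • Qq k a₁ a₂ b₁ b₂ 1)
      = (b₁ • Qq k a₁ a₂ b₁ b₂ 0 + b₂ • Qq k a₁ a₂ b₁ b₂ 1) * Pq k a₁ a₂ b₁ b₂ i := by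
    fin_cases i
    · exact hP0
    · exact hP1
    · exact hP2
  have hPi' : (b₁ • Qq k a₁ a₂ b₁ b₂ 0 + b₂ • Qq k a₁ a₂ b₁ b₂ 1) * Pq k a₁ a₂ b₁ b₂ i
      = Pq k a₁ a₂ b₁ b₂ i * (b₁ • Qq k a₁ a₂ b₁ b₂ 0 + b₂ • Qq k a₁ a₂ b₁ b₂ 1) := hPi.symm
  have hQ0 : Qq k a₁ a₂ b₁ b₂ 0 * Pq k a₁ a₂ b₁ b₂ i = Pq k a₁ a₂ b₁ b₂ i * Qq k a₁ a₂ b₁ b₂ 0 :=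
    aux_comm (P₀ := Qq k a₁ a₂ b₁ b₂ 0) (P₁ := Qq k a₁ a₂ b₁ b₂ 1) (v := Pq k a₁ a₂ b₁ b₂ i)
      (by simpa using qm 0 0) (by simpa using qm 0 1) (by simpa using qm 1 0)
      (by simpa using qm 1 1) hb₁ hb hPi'
  have hQ1 : Qq k a₁ a₂ b₁ b₂ 1 * Pq k a₁ a₂ b₁ b₂ i = Pq k a₁ a₂ b₁ b₂ i * Qq k a₁ a₂ b₁ b₂ 1 :=
    aux_comm (P₀ := Qq k a₁ a₂ b₁ b₂ 1) (P₁ := Qq k a₁ a₂ b₁ b₂ 0) (v := Pq k a₁ a₂ b₁ b₂ i)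
      (by simpa using qm 1 1) (by simpa using qm 1 0) (by simpa using qm 0 1)
      (by simpa using qm 0 0) hb₂ (Ne.symm hb) (comm_add_swap (R := Qab k a₁ a₂ b₁ b₂) hPi')
  have hQ2sum : Qq k a₁ a₂ b₁ b₂ 2 = 1 - Qq k a₁ a₂ b₁ b₂ 0 - Qq k a₁ a₂ b₁ b₂ 1 := by
    have h3 := Qq_sum k a₁ a₂ b₁ b₂
    rw [Fin.sum_univ_three] at h3
    rw [← h3]; abel
  have hQ2 : Qq k a₁ a₂ b₁ b₂ 2 * Pq k a₁ a₂ b₁ b₂ i = Pq k a₁ a₂ b₁ b₂ i * Qq k a₁ a₂ b₁ b₂ 2 := by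
    rw [hQ2sum]
    exact comm_one_sub_sub (R := Qab k a₁ a₂ b₁ b₂) hQ0 hQ1
  fin_cases j
  · exact hQ0.symm
  · exact hQ1.symm
  · exact hQ2.symm


variable (ha₁ : a₁ ≠ 0) (ha₂ : a₂ ≠ 0) (ha : a₁ ≠ a₂)
  (hb₁ : b₁ ≠ 0) (hb₂ : b₂ ≠ 0) (hb : b₁ ≠ b₂)

/-- the 9 orthogonal idempotents of the quotient -/
noncomputable def Eq' (m : Fin 3 × Fin 3) : Qab k a₁ a₂ b₁ b₂ :=
  Pq k a₁ a₂ b₁ b₂ m.1 * Qq k a₁ a₂ b₁ b₂ m.2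

include ha₁ ha₂ ha hb₁ hb₂ hb in
lemma E_mul (m n : Fin 3 × Fin 3) :
    Eq' k a₁ a₂ b₁ b₂ m * Eq' k a₁ a₂ b₁ b₂ n
      = if m = n then Eq' k a₁ a₂ b₁ b₂ m else 0 := by
  unfold Eq'
  rw [mul_assoc (Pq k a₁ a₂ b₁ b₂ m.1), ← mul_assoc (Qq k a₁ a₂ b₁ b₂ m.2),
    ← PQ_commute k a₁ a₂ b₁ b₂ ha₁ ha₂ ha hb₁ hb₂ hb n.1 m.2,
    mul_assoc (Pq k a₁ a₂ b₁ b₂ n.1), ← mul_assoc, Pq_mul, Qq_mul]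
  by_cases h1 : m.1 = n.1 <;> by_cases h2 : m.2 = n.2 <;>
    simp [h1, h2, Prod.ext_iff]

lemma E_sum : ∑ m : Fin 3 × Fin 3, Eq' k a₁ a₂ b₁ b₂ m = 1 := by
  have : ∑ m : Fin 3 × Fin 3, Eq' k a₁ a₂ b₁ b₂ m
      = ∑ i, ∑ j, Pq k a₁ a₂ b₁ b₂ i * Qq k a₁ a₂ b₁ b₂ j := by
    rw [Fintype.sum_prod_type]; rfl
  rw [this, ← Finset.sum_mul_sum, Pq_sum, Qq_sum, one_mul]

noncomputable def bwdLin : (Fin 3 × Fin 3 → k) →ₗ[k] Qab k a₁ a₂ b₁ b₂ where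
  toFun x := ∑ m, x m • Eq' k a₁ a₂ b₁ b₂ m
  map_add' x y := by simp [add_smul, Finset.sum_add_distrib]
  map_smul' c x := by simp [smul_smul, Finset.smul_sum]

lemma bwdLin_apply (x : Fin 3 × Fin 3 → k) :
    bwdLin k a₁ a₂ b₁ b₂ x = ∑ m, x m • Eq' k a₁ a₂ b₁ b₂ m := rfl

include ha₁ ha₂ ha hb₁ hb₂ hb in
lemma bwdLin_mul (x y : Fin 3 × Fin 3 → k) :
    bwdLin k a₁ a₂ b₁ b₂ (x * y) = bwdLin k a₁ a₂ b₁ b₂ x * bwdLin k a₁ a₂ b₁ b₂ y := by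
  rw [bwdLin_apply, bwdLin_apply, bwdLin_apply, Finset.sum_mul_sum]
  have h1 : ∀ m n : Fin 3 × Fin 3,
      (x m • Eq' k a₁ a₂ b₁ b₂ m) * (y n • Eq' k a₁ a₂ b₁ b₂ n)
        = if m = n then (x m * y n) • Eq' k a₁ a₂ b₁ b₂ m else 0 := by
    intro m n
    rw [smul_mul_smul_comm, E_mul k a₁ a₂ b₁ b₂ ha₁ ha₂ ha hb₁ hb₂ hb]
    split <;> simp
  simp_rw [h1]
  simp only [Finset.sum_ite_eq, Finset.mem_univ, if_true]
  rfl

noncomputable def bwd : (Fin 3 × Fin 3 → k) →ₐ[k] Qab k a₁ a₂ b₁ b₂ :=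
  AlgHom.ofLinearMap (bwdLin k a₁ a₂ b₁ b₂)
    (by rw [bwdLin_apply]
        simp only [Pi.one_apply, one_smul]
        exact E_sum k a₁ a₂ b₁ b₂)
    (bwdLin_mul k a₁ a₂ b₁ b₂ ha₁ ha₂ ha hb₁ hb₂ hb)

lemma bwd_apply (x : Fin 3 × Fin 3 → k) :
    bwd k a₁ a₂ b₁ b₂ ha₁ ha₂ ha hb₁ hb₂ hb x = ∑ m, x m • Eq' k a₁ a₂ b₁ b₂ m := rfl

lemma bwd_single (m : Fin 3 × Fin 3) :
    bwd k a₁ a₂ b₁ b₂ ha₁ ha₂ ha hb₁ hb₂ hb (Pi.single m 1) = Eq' k a₁ a₂ b₁ b₂ m := by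
  rw [bwd_apply]
  have : ∀ n : Fin 3 × Fin 3, (Pi.single m 1 : Fin 3 × Fin 3 → k) n • Eq' k a₁ a₂ b₁ b₂ n
      = if n = m then Eq' k a₁ a₂ b₁ b₂ n else 0 := by
    intro n
    rw [Pi.single_apply]
    split <;> simp
  simp_rw [this]
  simp [Finset.sum_ite_eq', Finset.mem_univ]


lemma fmap1_single (i : Fin 3) :
    fmap1 k (Pi.single i 1) = fun m : Fin 3 × Fin 3 => (Pi.single i 1 : Fin 3 → k) m.1 := rfl

lemma fmap2_single (i : Fin 3) :
    fmap2 k (Pi.single i 1) = fun m : Fin 3 × Fin 3 => (Pi.single i 1 : Fin 3 → k) m.2 := rfl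

lemma fwd'_Pq (i : Fin 3) :
    fwd' k a₁ a₂ b₁ b₂ (Pq k a₁ a₂ b₁ b₂ i) = fmap1 k (Pi.single i 1) := by
  rw [Pq, fwd'_mk, fwd_pgen]

lemma fwd'_Qq (j : Fin 3) :
    fwd' k a₁ a₂ b₁ b₂ (Qq k a₁ a₂ b₁ b₂ j) = fmap2 k (Pi.single j 1) := by
  rw [Qq, fwd'_mk, fwd_qgen]

lemma fwd'_E (m : Fin 3 × Fin 3) :
    fwd' k a₁ a₂ b₁ b₂ (Eq' k a₁ a₂ b₁ b₂ m) = Pi.single m 1 := by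
  rw [Eq', map_mul, fwd'_Pq, fwd'_Qq, fmap1_single, fmap2_single]
  funext n
  simp only [Pi.mul_apply, Pi.single_apply]
  rcases eq_or_ne n m with rfl | h
  · simp
  · rw [if_neg h]
    rcases eq_or_ne n.1 m.1 with h1 | h1
    · have h2 : n.2 ≠ m.2 := fun h2 => h (Prod.ext h1 h2)
      rw [if_neg h2, mul_zero]
    · rw [if_neg h1, zero_mul]

/-- extensionality for algebra maps out of `k^3` -/
lemma A3_ext {B : Type} [Semiring B] [Algebra k B] {f g : (Fin 3 → k) →ₐ[k] B}
    (h : ∀ i, f (Pi.single i 1) = g (Pi.single i 1)) : f = g := by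
  apply AlgHom.toLinearMap_injective
  apply Module.Basis.ext (Pi.basisFun k (Fin 3))
  intro i
  simpa [Pi.basisFun_apply] using h i

/-- extensionality for algebra maps out of the free product -/
lemma FP_ext {B : Type} [Semiring B] [Algebra k B]
    {f g : FP k (Fin 3 → k) (Fin 3 → k) →ₐ[k] B}
    (h : ∀ i : Bool, f.comp (LinearAlgebra.FreeProduct.ι k (fam (Fin 3 → k) (Fin 3 → k)) i)
      = g.comp (LinearAlgebra.FreeProduct.ι k (fam (Fin 3 → k) (Fin 3 → k)) i)) : f = g := by
  rw [lift_unique k (fam (Fin 3 → k) (Fin 3 → k))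
    (fun {i} => g.comp (LinearAlgebra.FreeProduct.ι k (fam (Fin 3 → k) (Fin 3 → k)) i)) f h,
    ← lift_unique k (fam (Fin 3 → k) (Fin 3 → k))
    (fun {i} => g.comp (LinearAlgebra.FreeProduct.ι k (fam (Fin 3 → k) (Fin 3 → k)) i)) g
    (fun _ => rfl)]

lemma bwd_fmap1 (i : Fin 3) :
    bwd k a₁ a₂ b₁ b₂ ha₁ ha₂ ha hb₁ hb₂ hb (fmap1 k (Pi.single i 1)) = Pq k a₁ a₂ b₁ b₂ i := by
  rw [fmap1_single, bwd_apply, Fintype.sum_prod_type]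
  have h1 : ∀ r : Fin 3, ∑ j : Fin 3,
      (Pi.single i 1 : Fin 3 → k) r • Eq' k a₁ a₂ b₁ b₂ (r, j)
        = (Pi.single i 1 : Fin 3 → k) r • Pq k a₁ a₂ b₁ b₂ r := by
    intro r
    rw [← Finset.smul_sum]
    congr 1
    have : ∑ j : Fin 3, Eq' k a₁ a₂ b₁ b₂ (r, j)
        = Pq k a₁ a₂ b₁ b₂ r * ∑ j, Qq k a₁ a₂ b₁ b₂ j := by
      rw [Finset.mul_sum]; rfl
    rw [this, Qq_sum, mul_one]
  simp_rw [h1]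
  have h2 : ∀ r : Fin 3, (Pi.single i 1 : Fin 3 → k) r • Pq k a₁ a₂ b₁ b₂ r
      = if r = i then Pq k a₁ a₂ b₁ b₂ r else 0 := by
    intro r; rw [Pi.single_apply]; split <;> simp
  simp_rw [h2]
  simp [Finset.sum_ite_eq', Finset.mem_univ]

lemma bwd_fmap2 (j : Fin 3) :
    bwd k a₁ a₂ b₁ b₂ ha₁ ha₂ ha hb₁ hb₂ hb (fmap2 k (Pi.single j 1)) = Qq k a₁ a₂ b₁ b₂ j := by
  rw [fmap2_single, bwd_apply, Fintype.sum_prod_type]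
  have h1 : ∀ r : Fin 3, ∑ s : Fin 3,
      (Pi.single j 1 : Fin 3 → k) s • Eq' k a₁ a₂ b₁ b₂ (r, s)
        = Pq k a₁ a₂ b₁ b₂ r * ((Pi.single j 1 : Fin 3 → k) j • Qq k a₁ a₂ b₁ b₂ j) := by
    intro r
    have h2 : ∀ s : Fin 3, (Pi.single j 1 : Fin 3 → k) s • Eq' k a₁ a₂ b₁ b₂ (r, s)
        = Pq k a₁ a₂ b₁ b₂ r * (if s = j then Qq k a₁ a₂ b₁ b₂ s else 0) := by
      intro s
      rw [Pi.single_apply, Eq']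
      split <;> simp [mul_smul_comm]
    simp_rw [h2]
    rw [← Finset.mul_sum]
    simp [Finset.sum_ite_eq', Finset.mem_univ, Pi.single_apply]
  simp_rw [h1]
  rw [← Finset.sum_mul, Pq_sum, one_mul]
  simp [Pi.single_apply]


/-- extensionality for algebra maps out of `k^{3×3}` -/
lemma T_ext {B : Type} [Semiring B] [Algebra k B] {f g : (Fin 3 × Fin 3 → k) →ₐ[k] B}
    (h : ∀ m, f (Pi.single m 1) = g (Pi.single m 1)) : f = g := by
  apply AlgHom.toLinearMap_injective
  apply Module.Basis.ext (Pi.basisFun k (Fin 3 × Fin 3))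
  intro m
  simpa [Pi.basisFun_apply] using h m

noncomputable def theEquiv : Qab k a₁ a₂ b₁ b₂ ≃ₐ[k] (Fin 3 × Fin 3 → k) := by
  refine AlgEquiv.ofAlgHom (fwd' k a₁ a₂ b₁ b₂) (bwd k a₁ a₂ b₁ b₂ ha₁ ha₂ ha hb₁ hb₂ hb) ?_ ?_
  · apply T_ext
    intro m
    show fwd' k a₁ a₂ b₁ b₂ (bwd k a₁ a₂ b₁ b₂ ha₁ ha₂ ha hb₁ hb₂ hb (Pi.single m 1))
      = Pi.single m 1
    rw [bwd_single, fwd'_E]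
  · have hΦ : ((bwd k a₁ a₂ b₁ b₂ ha₁ ha₂ ha hb₁ hb₂ hb).comp
        (fwd' k a₁ a₂ b₁ b₂)).comp
          (RingQuot.mkAlgHom k (fun u v => u = commab k a₁ a₂ b₁ b₂ ∧ v = 0))
        = RingQuot.mkAlgHom k (fun u v => u = commab k a₁ a₂ b₁ b₂ ∧ v = 0) := by
      apply FP_ext
      intro i
      cases i
      · apply A3_ext
        intro j
        show bwd k a₁ a₂ b₁ b₂ ha₁ ha₂ ha hb₁ hb₂ hb
          (fwd' k a₁ a₂ b₁ b₂ (Qq k a₁ a₂ b₁ b₂ j)) = Qq k a₁ a₂ b₁ b₂ j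
        rw [fwd'_Qq, bwd_fmap2]
      · apply A3_ext
        intro j
        show bwd k a₁ a₂ b₁ b₂ ha₁ ha₂ ha hb₁ hb₂ hb
          (fwd' k a₁ a₂ b₁ b₂ (Pq k a₁ a₂ b₁ b₂ j)) = Pq k a₁ a₂ b₁ b₂ j
        rw [fwd'_Pq, bwd_fmap1]
    apply AlgHom.ext
    intro z
    obtain ⟨t, rfl⟩ := RingQuot.mkAlgHom_surjective k _ z
    exact AlgHom.congr_fun hΦ t

noncomputable def idxEquiv : (Fin 3 × Fin 3 → k) ≃ₐ[k] (Fin 9 → k) :=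
  AlgEquiv.ofRingEquiv
    (f := RingEquiv.piCongrLeft' (fun _ => k) (finProdFinEquiv : Fin 3 × Fin 3 ≃ Fin 9))
    (fun _ => rfl)

noncomputable def fullEquiv : Qab k a₁ a₂ b₁ b₂ ≃ₐ[k] (Fin 9 → k) :=
  (theEquiv k a₁ a₂ b₁ b₂ ha₁ ha₂ ha hb₁ hb₂ hb).trans (idxEquiv k)

end main

/-- simple modules over something isomorphic to `k^9` have rank one -/
lemma simple_rank {k : Type} [Field k] {Q : Type} [Ring Q] [Algebra k Q]
    (e : Q ≃ₐ[k] (Fin 9 → k)) (M : Type) [AddCommGroup M] [Module Q M] [Module k M]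
    [IsScalarTower k Q M] (hM : IsSimpleModule Q M) : Module.rank k M = 1 := by
  classical
  haveI := hM
  haveI : Nontrivial M := IsSimpleModule.nontrivial Q M
  obtain ⟨v, hv⟩ := exists_ne (0 : M)
  have hsum : ∑ m : Fin 9, e.symm (Pi.single m 1) = 1 := by
    rw [← map_sum, single_one_sum, map_one]
  have hkey : ∀ (x : Q) (m : Fin 9),
      x * e.symm (Pi.single m 1) = e x m • e.symm (Pi.single m 1) := by
    intro x m
    apply e.injective
    rw [map_mul, map_smul, AlgEquiv.apply_symm_apply]
    funext n
    simp only [Pi.mul_apply, Pi.smul_apply, Pi.single_apply, smul_eq_mul]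
    rcases eq_or_ne n m with rfl | h
    · simp
    · simp [h]
  have hex : ∃ m : Fin 9, e.symm (Pi.single m 1) • v ≠ 0 := by
    by_contra hall
    push_neg at hall
    apply hv
    calc v = (1 : Q) • v := (one_smul Q v).symm
    _ = (∑ m : Fin 9, e.symm (Pi.single m 1)) • v := by rw [hsum]
    _ = ∑ m : Fin 9, e.symm (Pi.single m 1) • v := Finset.sum_smul
    _ = 0 := by simp [hall]
  obtain ⟨m, hw⟩ := hex
  set w := e.symm (Pi.single m 1) • v with hwdef
  have hxw : ∀ x : Q, x • w = e x m • w := by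
    intro x
    calc x • w = (x * e.symm (Pi.single m 1)) • v := by rw [hwdef, mul_smul]
    _ = (e x m • e.symm (Pi.single m 1)) • v := by rw [hkey]
    _ = e x m • w := smul_assoc _ _ _
  haveI : NoZeroSMulDivisors k M := by
    constructor
    intro c x h
    by_cases hc : c = 0
    · exact Or.inl hc
    · right
      have := congrArg (fun y => c⁻¹ • y) h
      simpa [smul_smul, inv_mul_cancel₀ hc] using this
  let N : Submodule Q M :=
    { carrier := (Submodule.span k {w} : Submodule k M)
      add_mem' := fun h1 h2 => Submodule.add_mem _ h1 h2
      zero_mem' := Submodule.zero_mem _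
      smul_mem' := by
        intro c x hx
        rw [SetLike.mem_coe, Submodule.mem_span_singleton] at hx
        obtain ⟨d, rfl⟩ := hx
        rw [SetLike.mem_coe, Submodule.mem_span_singleton]
        refine ⟨d * e c m, ?_⟩
        calc (d * e c m) • w = d • (e c m • w) := mul_smul _ _ _
        _ = d • (c • w) := by rw [hxw]
        _ = (algebraMap k Q d) • (c • w) := (algebraMap_smul Q d _).symm
        _ = ((algebraMap k Q d) * c) • w := (mul_smul _ _ _).symm
        _ = (c * algebraMap k Q d) • w := by rw [Algebra.commutes]
        _ = c • ((algebraMap k Q d) • w) := mul_smul _ _ _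
        _ = c • (d • w) := by rw [algebraMap_smul] }
  have hNw : w ∈ N := by
    show w ∈ (Submodule.span k {w} : Submodule k M)
    exact Submodule.mem_span_singleton_self w
  have hN : N = ⊤ := by
    rcases eq_bot_or_eq_top N with h | h
    · exfalso
      rw [h] at hNw
      exact hw (by simpa using hNw)
    · exact h
  apply rank_eq_one w hw
  intro u
  have hu : u ∈ Submodule.span k {w} := by
    have : u ∈ N := hN ▸ Submodule.mem_top
    exact this
  rwa [Submodule.mem_span_singleton] at hu

end St9

theorem statement9 (k : Type) [Field k] [IsAlgClosed k] [CharZero k]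
    (a₁ a₂ b₁ b₂ : k) (ha₁ : a₁ ≠ 0) (ha₂ : a₂ ≠ 0) (ha : a₁ ≠ a₂)
    (hb₁ : b₁ ≠ 0) (hb₂ : b₂ ≠ 0) (hb : b₁ ≠ b₂) :
    Nonempty (Qab k a₁ a₂ b₁ b₂ ≃ₐ[k] (Fin 9 → k)) ∧
    ∀ (M : Type) [AddCommGroup M] [Module (Qab k a₁ a₂ b₁ b₂) M] [Module k M]
      [IsScalarTower k (Qab k a₁ a₂ b₁ b₂) M],
      IsSimpleModule (Qab k a₁ a₂ b₁ b₂) M → Module.rank k M = 1 := by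
  constructor
  · exact ⟨St9.fullEquiv k a₁ a₂ b₁ b₂ ha₁ ha₂ ha hb₁ hb₂ hb⟩
  · intro M _ _ _ _ hM
    exact St9.simple_rank (St9.fullEquiv k a₁ a₂ b₁ b₂ ha₁ ha₂ ha hb₁ hb₂ hb) M hM
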